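/- For every integer n ≥ 2, the function (t_1, …, t_n) ↦ 1/((1 − t_1)·t_2·t_3 ⋯ t_n) is integrable on the open simplex {(t_1, …, t_n) ∈ ℝⁿ : 0 < t_1 < t_2 < ⋯ < t_n < 1}, and its integral with respect to n-dimensional Lebesgue measure equals ζ(n). -/

import Mathlib

open MeasureTheory Set ENNReal

noncomputable section ZetaSimplexAux

set_option maxHeartbeats 1000000

private def mzSet (n : ℕ) (x : ℝ) : Set (Fin n → ℝ) :=
  {t | StrictMono t ∧ ∀ i, t i ∈ Set.Ioo 0 x}

private lemma measurableSet_mzSet (n : ℕ) (x : ℝ) : MeasurableSet (mzSet n x) := by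
  have h1 : {t : Fin n → ℝ | StrictMono t}
      = ⋂ (a) (b) (_ : a < b), {t : Fin n → ℝ | t a < t b} := by
    ext t; simp [StrictMono]
  have h2 : {t : Fin n → ℝ | ∀ i, t i ∈ Set.Ioo 0 x}
      = ⋂ i, (fun t : Fin n → ℝ => t i) ⁻¹' Set.Ioo 0 x := by
    ext t; simp
  rw [mzSet, Set.setOf_and, h1, h2]
  exact (MeasurableSet.iInter fun a => MeasurableSet.iInter fun b =>
      MeasurableSet.iInter fun _ =>
        measurableSet_lt (measurable_pi_apply a) (measurable_pi_apply b)).inter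
    (MeasurableSet.iInter fun i => (measurable_pi_apply i) measurableSet_Ioo)

private lemma prod_erase_zero' {n : ℕ} (f : Fin (n+1) → ℝ) :
    ∏ i ∈ Finset.univ.erase (0 : Fin (n+1)), f i = ∏ i : Fin n, f i.succ := by
  rw [Fin.univ_succ, Finset.erase_cons, Finset.prod_map]
  rfl

private lemma lint_pow (k : ℕ) (x : ℝ) (hx : 0 ≤ x) :
    ∫⁻ y in Set.Ioo (0:ℝ) x, ENNReal.ofReal (y^k)
      = ENNReal.ofReal (x^(k+1)/(k+1)) := by
  rw [← ofReal_integral_eq_lintegral_ofReal]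
  · rw [← MeasureTheory.integral_Ioc_eq_integral_Ioo,
      ← intervalIntegral.integral_of_le hx, integral_pow]
    norm_num
  · exact ((intervalIntegral.intervalIntegrable_pow k).1).mono_set Set.Ioo_subset_Ioc_self
  · filter_upwards [ae_restrict_mem measurableSet_Ioo] with y hy
    exact pow_nonneg hy.1.le k

private lemma cons_mem_iff {n : ℕ} (x y : ℝ) (r : Fin (n+1) → ℝ) :
    (Fin.cons y r ∈ mzSet (n+2) x)
      ↔ y ∈ Set.Ioo 0 (r 0) ∧ r ∈ mzSet (n+1) x := by
  constructor
  · rintro ⟨hsm, hmem⟩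
    have hr : StrictMono r := by
      have : StrictMono (Fin.cons y r ∘ Fin.succ : Fin (n+1) → ℝ) :=
        hsm.comp (Fin.strictMono_succ)
      simpa using this
    refine ⟨⟨(hmem 0).1, ?_⟩, hr, fun i => by simpa using hmem i.succ⟩
    have := hsm (show (0 : Fin (n+2)) < 1 by simp [Fin.lt_def])
    simpa using this
  · rintro ⟨⟨hy0, hyr⟩, hr, hmem⟩
    constructor
    · rw [Fin.strictMono_iff_lt_succ]
      intro i
      induction i using Fin.cases with
      | zero => simpa using hyr
      | succ j =>
          have : r j.castSucc < r j.succ := hr (Fin.castSucc_lt_succ (i := j))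
          rw [← Fin.succ_castSucc]
          simpa using this
    · intro i
      induction i using Fin.cases with
      | zero => exact ⟨hy0, hyr.trans (hmem 0).2⟩
      | succ j => simpa using hmem j

private lemma arith1 (k : ℕ) (a P c : ℝ) (ha : 0 < a) (hP : 0 < P) (hc : 0 < c) :
    a^(k+1)/c * (a*P)⁻¹ = a^k/P * (1/c) := by
  rw [pow_succ]
  field_simp

private lemma key (k : ℕ) (n : ℕ) : ∀ x : ℝ, 0 < x →
    ∫⁻ t in mzSet (n+1) x,
        ENNReal.ofReal ((t 0)^k / ∏ i ∈ Finset.univ.erase (0 : Fin (n+1)), t i)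
      = ENNReal.ofReal (x^(k+1) / ((k:ℝ)+1)^(n+1)) := by
  induction n with
  | zero =>
    intro x hx
    set f : (Fin 1 → ℝ) → ℝ≥0∞ :=
      (mzSet 1 x).indicator fun t =>
        ENNReal.ofReal ((t 0)^k / ∏ i ∈ Finset.univ.erase (0 : Fin 1), t i) with hf
    have hemb := ((volume_preserving_funUnique (Fin 1) ℝ).symm).lintegral_comp_emb
      (MeasurableEquiv.measurableEmbedding _) f
    rw [← lintegral_indicator (measurableSet_mzSet 1 x) _, ← hf]
    refine Eq.trans hemb.symm ?_
    have hpt : ∀ y : ℝ, f ((MeasurableEquiv.funUnique (Fin 1) ℝ).symm y)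
        = (Set.Ioo (0:ℝ) x).indicator (fun y => ENNReal.ofReal (y^k)) y := by
      intro y
      have h1 : ((MeasurableEquiv.funUnique (Fin 1) ℝ).symm y) = fun _ => y := rfl
      have h2 : (fun _ => y) ∈ mzSet 1 x ↔ y ∈ Set.Ioo (0:ℝ) x := by
        constructor
        · rintro ⟨-, h⟩; exact h 0
        · intro h; exact ⟨Subsingleton.strictMono _, fun _ => h⟩
      have h3 : Finset.univ.erase (0 : Fin 1) = ∅ := by decide
      rw [hf, h1]
      by_cases hy : y ∈ Set.Ioo (0:ℝ) x
      · rw [Set.indicator_of_mem (h2.2 hy), Set.indicator_of_mem hy, h3]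
        simp
      · rw [Set.indicator_of_notMem (fun c => hy (h2.1 c)), Set.indicator_of_notMem hy]
    simp_rw [hpt]
    rw [lintegral_indicator measurableSet_Ioo _, lint_pow k x hx.le]
    norm_num
  | succ n IH =>
    intro x hx
    set F : (Fin (n+2) → ℝ) → ℝ≥0∞ :=
      (mzSet (n+2) x).indicator fun t =>
        ENNReal.ofReal ((t 0)^k / ∏ i ∈ Finset.univ.erase (0 : Fin (n+2)), t i) with hF
    have hemb := ((volume_preserving_piFinSuccAbove (fun _ : Fin (n+2) => ℝ) 0).symm).lintegral_comp_emb
      (MeasurableEquiv.measurableEmbedding _) F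
    rw [← lintegral_indicator (measurableSet_mzSet _ x) _, ← hF, ← hemb]
    set T : Set (ℝ × (Fin (n+1) → ℝ)) :=
      {p | p.1 ∈ Set.Ioo 0 (p.2 0) ∧ p.2 ∈ mzSet (n+1) x} with hT
    set g : ℝ × (Fin (n+1) → ℝ) → ℝ≥0∞ := fun p =>
      ENNReal.ofReal (p.1^k / (p.2 0 * ∏ i ∈ Finset.univ.erase (0 : Fin (n+1)), p.2 i)) with hg
    have hTm : MeasurableSet T := by
      apply MeasurableSet.inter
      · exact (measurableSet_lt measurable_const measurable_fst).inter
          (measurableSet_lt measurable_fst ((measurable_pi_apply 0).comp measurable_snd))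
      · exact measurable_snd (measurableSet_mzSet _ _)
    have hgm : Measurable g := by
      apply Measurable.ennreal_ofReal
      apply Measurable.div
      · exact measurable_fst.pow_const k
      · exact ((measurable_pi_apply 0).comp measurable_snd).mul
          (Finset.measurable_prod _ fun i _ => (measurable_pi_apply i).comp measurable_snd)
    have hpt : ∀ p : ℝ × (Fin (n+1) → ℝ),
        F ((MeasurableEquiv.piFinSuccAbove (fun _ : Fin (n+2) => ℝ) 0).symm p)
          = T.indicator g p := by
      rintro ⟨y, r⟩
      have h1 : ((MeasurableEquiv.piFinSuccAbove (fun _ : Fin (n+2) => ℝ) 0).symm (y, r))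
          = Fin.cons y r := by
        ext i
        induction i using Fin.cases with
        | zero => simp [MeasurableEquiv.piFinSuccAbove_symm_apply]
        | succ j => simp [MeasurableEquiv.piFinSuccAbove_symm_apply, Fin.zero_succAbove]
      rw [hF, h1]
      by_cases hmem : (y, r) ∈ T
      · rw [Set.indicator_of_mem ((cons_mem_iff x y r).2 hmem),
          Set.indicator_of_mem hmem, hg]
        congr 1
        rw [Fin.cons_zero, prod_erase_zero']
        simp only [Fin.cons_succ]
        rw [← Finset.mul_prod_erase Finset.univ r (Finset.mem_univ 0)]
      · rw [Set.indicator_of_notMem, Set.indicator_of_notMem hmem]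
        intro c
        exact hmem ((cons_mem_iff x y r).1 c)
    rw [lintegral_congr hpt]
    rw [Measure.volume_eq_prod, lintegral_prod_symm' _ (hgm.indicator hTm)]
    have hin : ∀ r : Fin (n+1) → ℝ, (∫⁻ y, T.indicator g (y, r))
        = (mzSet (n+1) x).indicator (fun r =>
            ENNReal.ofReal ((r 0)^k / ∏ i ∈ Finset.univ.erase (0 : Fin (n+1)), r i)
              * ENNReal.ofReal (1/((k:ℝ)+1))) r := by
      intro r
      by_cases hr : r ∈ mzSet (n+1) x
      · rw [Set.indicator_of_mem hr]
        have hr0 : 0 < r 0 := (hr.2 0).1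
        have hP : 0 < ∏ i ∈ Finset.univ.erase (0 : Fin (n+1)), r i :=
          Finset.prod_pos fun i _ => (hr.2 i).1
        have hvy : ∀ y : ℝ, T.indicator g (y, r)
            = (Set.Ioo 0 (r 0)).indicator (fun y => ENNReal.ofReal (y^k)
                * ENNReal.ofReal ((r 0 * ∏ i ∈ Finset.univ.erase (0 : Fin (n+1)), r i)⁻¹)) y := by
          intro y
          by_cases hy : y ∈ Set.Ioo 0 (r 0)
          · rw [Set.indicator_of_mem (show (y, r) ∈ T from ⟨hy, hr⟩), Set.indicator_of_mem hy, hg]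
            beta_reduce
            rw [div_eq_mul_inv, ENNReal.ofReal_mul (pow_nonneg hy.1.le k)]
          · rw [Set.indicator_of_notMem (fun c => hy c.1), Set.indicator_of_notMem hy]
        rw [lintegral_congr hvy]
        rw [lintegral_indicator measurableSet_Ioo _,
          lintegral_mul_const _ (by measurability : Measurable fun y : ℝ => ENNReal.ofReal (y ^ k)),
          lint_pow k (r 0) hr0.le,
          ← ENNReal.ofReal_mul (by positivity), ← ENNReal.ofReal_mul (by positivity)]
        exact congrArg _ (arith1 k (r 0) _ _ hr0 hP (by positivity))
      · rw [Set.indicator_of_notMem hr]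
        have : ∀ y : ℝ, T.indicator g (y, r) = 0 :=
          fun y => Set.indicator_of_notMem (fun c => hr c.2) _
        rw [lintegral_congr this, lintegral_zero]
    rw [lintegral_congr hin]
    rw [lintegral_indicator (measurableSet_mzSet _ _) _,
      lintegral_mul_const _ ((measurable_pi_apply 0).pow_const k |>.div
        (Finset.measurable_prod _ fun i _ => measurable_pi_apply i) |>.ennreal_ofReal),
      IH x hx, ← ENNReal.ofReal_mul (by positivity)]
    congr 1
    rw [div_mul_div_comm, mul_one, ← pow_succ]

end ZetaSimplexAux

open MeasureTheory

/-- For every integer `n ≥ 2`, the function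
`(t₁, …, t_n) ↦ 1/((1 − t₁)·t₂·t₃ ⋯ t_n)` is integrable on the open simplex
`{0 < t₁ < t₂ < ⋯ < t_n < 1} ⊂ ℝⁿ`, and its integral with respect to
`n`-dimensional Lebesgue measure equals `ζ(n)`. -/
theorem integral_simplex_eq_zeta (n : ℕ) (hn : 2 ≤ n) :
    IntegrableOn
      (fun t : Fin n → ℝ =>
        1 / ((1 - t ⟨0, by omega⟩) * ∏ i ∈ Finset.univ.erase (⟨0, by omega⟩ : Fin n), t i))
      {t : Fin n → ℝ | StrictMono t ∧ ∀ i, t i ∈ Set.Ioo (0 : ℝ) 1} ∧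
    (∫ t in {t : Fin n → ℝ | StrictMono t ∧ ∀ i, t i ∈ Set.Ioo (0 : ℝ) 1},
        1 / ((1 - t ⟨0, by omega⟩) * ∏ i ∈ Finset.univ.erase (⟨0, by omega⟩ : Fin n), t i))
      = ∑' k : ℕ+, (1 : ℝ) / (k : ℝ) ^ n := by
  obtain ⟨m, rfl⟩ : ∃ m, n = m + 2 := ⟨n - 2, by omega⟩
  have hz : (⟨0, by omega⟩ : Fin (m+2)) = 0 := rfl
  simp only [hz]
  set P : (Fin (m+2) → ℝ) → ℝ :=
    fun t => ∏ i ∈ Finset.univ.erase (0 : Fin (m+2)), t i with hPdef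
  set F : (Fin (m+2) → ℝ) → ℝ := fun t => 1 / ((1 - t 0) * P t) with hFdef
  have hM : {t : Fin (m+2) → ℝ | StrictMono t ∧ ∀ i, t i ∈ Set.Ioo (0 : ℝ) 1}
      = mzSet (m+2) 1 := rfl
  rw [hM]
  -- nonnegativity on the set
  have hnonneg : ∀ t ∈ mzSet (m+2) 1, 0 ≤ F t := by
    intro t ht
    have h1 : (0:ℝ) < 1 - t 0 := by linarith [(ht.2 0).2]
    have hP : 0 < P t := Finset.prod_pos fun i _ => (ht.2 i).1
    positivity
  have hFmeas : Measurable F :=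
    measurable_const.div ((measurable_const.sub (measurable_pi_apply 0)).mul
      (Finset.measurable_prod _ fun i _ => measurable_pi_apply i))
  -- summability facts
  have hsummable : Summable (fun k : ℕ => 1/((k:ℝ)+1)^(m+2)) := by
    have h := Real.summable_one_div_nat_pow.mpr (show 1 < m+2 by omega)
    exact ((_root_.summable_nat_add_iff 1).mpr h).congr fun k => by push_cast; ring_nf
  -- the lintegral computation
  have hL : ∫⁻ t in mzSet (m+2) 1, ENNReal.ofReal (F t)
      = ENNReal.ofReal (∑' k : ℕ+, (1:ℝ) / (k : ℝ) ^ (m+2)) := by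
    have hpt : ∀ t ∈ mzSet (m+2) 1,
        ENNReal.ofReal (F t) = ∑' k : ℕ, ENNReal.ofReal ((t 0)^k / P t) := by
      intro t ht
      have h0 : 0 < t 0 := (ht.2 0).1
      have h1 : t 0 < 1 := (ht.2 0).2
      have hP : 0 < P t := Finset.prod_pos fun i _ => (ht.2 i).1
      have hsum : Summable (fun k : ℕ => (t 0)^k / P t) :=
        (summable_geometric_of_lt_one h0.le h1).div_const _
      rw [← ENNReal.ofReal_tsum_of_nonneg (fun k => by positivity) hsum]
      congr 1
      rw [tsum_div_const, tsum_geometric_of_lt_one h0.le h1, hFdef]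
      beta_reduce
      rw [one_div, mul_inv, div_eq_mul_inv]
    calc ∫⁻ t in mzSet (m+2) 1, ENNReal.ofReal (F t)
        = ∫⁻ t in mzSet (m+2) 1, ∑' k : ℕ, ENNReal.ofReal ((t 0)^k / P t) :=
          setLIntegral_congr_fun (measurableSet_mzSet _ _) hpt
      _ = ∑' k : ℕ, ∫⁻ t in mzSet (m+2) 1, ENNReal.ofReal ((t 0)^k / P t) :=
          lintegral_tsum fun k => ((measurable_pi_apply 0).pow_const k |>.div
            (Finset.measurable_prod _ fun i _ => measurable_pi_apply i)
            |>.ennreal_ofReal).aemeasurable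
      _ = ∑' k : ℕ, ENNReal.ofReal (1/((k:ℝ)+1)^(m+2)) := by
          refine tsum_congr fun k => ?_
          have := key k (m+1) 1 one_pos
          rw [this]
          norm_num
      _ = ENNReal.ofReal (∑' k : ℕ, 1/((k:ℝ)+1)^(m+2)) :=
          (ENNReal.ofReal_tsum_of_nonneg (fun k => by positivity) hsummable).symm
      _ = ENNReal.ofReal (∑' k : ℕ+, (1:ℝ) / (k : ℝ) ^ (m+2)) := by
          congr 1
          rw [← Equiv.pnatEquivNat.symm.tsum_eq (fun k : ℕ+ => (1:ℝ)/(k:ℝ)^(m+2))]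
          refine tsum_congr fun k => ?_
          simp [Equiv.pnatEquivNat]
  have hζ0 : 0 ≤ ∑' k : ℕ+, (1:ℝ) / (k : ℝ) ^ (m+2) :=
    tsum_nonneg fun k => by positivity
  constructor
  · refine ⟨hFmeas.aestronglyMeasurable, ?_⟩
    rw [hasFiniteIntegral_iff_ofReal ?_]
    · rw [hL]; exact ENNReal.ofReal_lt_top
    · filter_upwards [ae_restrict_mem (measurableSet_mzSet _ _)] with t ht
      exact hnonneg t ht
  · rw [integral_eq_lintegral_of_nonneg_ae ?_ hFmeas.aestronglyMeasurable]
    · rw [hL, ENNReal.toReal_ofReal hζ0]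
    · filter_upwards [ae_restrict_mem (measurableSet_mzSet _ _)] with t ht
      exact hnonneg t ht
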